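/- (Upper large deviations bound with errors.) Let H, η : ℝ^d → ℝ be uniformly bounded on compact sets, C > 0, and {Ξ_τ}_{τ≥1} a family of ℝ^d-valued random vectors with |Ξ_τ| ≤ C almost surely. For a > 0 and β₀ ∈ ℝ^d define L_a^{β₀}(α) = sup_{|β+β₀|≤a} (⟨β,α⟩ − H(β)) and η_a^{β₀} = sup_{|β+β₀|≤a} η(β). Then for every λ, a > 0 there exists τ₀ = τ₀(λ,a,C) such that: if for some τ ≥ τ₀ we have τ^{-1} log E e^{τ⟨β,Ξ_τ⟩} ≤ H(β) + η(β) for all β with |β+β₀| ≤ a, then for every compact K ⊆ ℝ^d, P{Ξ_τ ∈ K} ≤ exp( −τ ( inf_{α∈K} L_a^{β₀}(α) − η_a^{β₀} − λ|β₀| − λ ) ). -/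

import Mathlib

open MeasureTheory
open scoped RealInnerProductSpace

set_option maxHeartbeats 1000000

/-- Upper large deviations bound with errors (Lemma on general LD bounds):
if the exponential moments of the bounded random vectors `Ξ_τ` are bounded above by
`H + η` on the ball `{‖β + β₀‖ ≤ a}`, then for `τ` large enough (depending only on
`λ, a, C`) and every compact `K`,
`P{Ξ_τ ∈ K} ≤ exp(-τ(inf_K L_a^{β₀} - η_a^{β₀} - λ‖β₀‖ - λ))`, where
`L_a^{β₀}(α) = sup_{‖β+β₀‖≤a} (⟨β,α⟩ - H(β))` and `η_a^{β₀} = sup_{‖β+β₀‖≤a} η(β)`. -/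
theorem stmt_8 {d : ℕ} {Ω : Type*} [MeasurableSpace Ω] (P : Measure Ω)
    [IsProbabilityMeasure P]
    (H η : EuclideanSpace ℝ (Fin d) → ℝ)
    (hbd : ∀ s : Set (EuclideanSpace ℝ (Fin d)), IsCompact s →
      ∃ Cs : ℝ, ∀ β ∈ s, |H β| ≤ Cs ∧ |η β| ≤ Cs)
    (C : ℝ) (hC : 0 < C) (Ξ : ℝ → Ω → EuclideanSpace ℝ (Fin d))
    (hmeas : ∀ τ : ℝ, 1 ≤ τ → Measurable (Ξ τ))
    (hbdd : ∀ τ : ℝ, 1 ≤ τ → ∀ᵐ ω ∂P, ‖Ξ τ ω‖ ≤ C) :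
    ∀ lam a : ℝ, 0 < lam → 0 < a → ∃ τ₀ : ℝ, ∀ τ : ℝ, 1 ≤ τ → τ₀ ≤ τ →
      ∀ β₀ : EuclideanSpace ℝ (Fin d),
        (∀ β : EuclideanSpace ℝ (Fin d), ‖β + β₀‖ ≤ a →
            τ⁻¹ * Real.log (∫ ω, Real.exp (τ * ⟪β, Ξ τ ω⟫) ∂P) ≤ H β + η β) →
        ∀ K : Set (EuclideanSpace ℝ (Fin d)), IsCompact K →
          (P {ω | Ξ τ ω ∈ K}).toReal ≤
            Real.exp (-τ *
              (sInf ((fun α => sSup ((fun β => ⟪β, α⟫ - H β) '' {β | ‖β + β₀‖ ≤ a})) '' K)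
                - sSup (η '' {β | ‖β + β₀‖ ≤ a}) - lam * ‖β₀‖ - lam)) := by
  classical
  intro lam a hlam ha
  set δ : ℝ := min lam (lam / (4 * (a + 1))) with hδdef
  have hδpos : 0 < δ := lt_min hlam (by positivity)
  obtain ⟨t, -, htfin, htcov⟩ :=
    (isCompact_closedBall (0 : EuclideanSpace ℝ (Fin d)) C).finite_cover_balls
      (half_pos hδpos)
  set N : ℝ := (htfin.toFinset.card : ℝ) + 1 with hNdef
  have hN1 : (1 : ℝ) ≤ N := by
    have : (0 : ℝ) ≤ (htfin.toFinset.card : ℝ) := by positivity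
    linarith
  refine ⟨2 / lam * Real.log N, ?_⟩
  intro τ hτ1 hτ0 β₀ hmom K hK
  have hτpos : (0 : ℝ) < τ := lt_of_lt_of_le one_pos hτ1
  set B : Set (EuclideanSpace ℝ (Fin d)) := {β | ‖β + β₀‖ ≤ a} with hBdef
  have hBball : B = Metric.closedBall (-β₀) a := by
    ext β; simp [hBdef, Metric.mem_closedBall, dist_eq_norm, sub_neg_eq_add]
  have hBcomp : IsCompact B := hBball ▸ isCompact_closedBall _ _
  obtain ⟨CH, hCH⟩ := hbd B hBcomp
  have hβ₀B : -β₀ ∈ B := by simp [hBdef, ha.le]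
  have hβnormB : ∀ β ∈ B, ‖β‖ ≤ a + ‖β₀‖ := by
    intro β hβ
    have h1 : ‖(β + β₀) - β₀‖ ≤ ‖β + β₀‖ + ‖β₀‖ := norm_sub_le _ _
    simpa using h1.trans (by exact add_le_add (show ‖β + β₀‖ ≤ a from hβ) le_rfl)
  set Lfun := fun α : EuclideanSpace ℝ (Fin d) =>
    sSup ((fun β => ⟪β, α⟫ - H β) '' B) with hLdef
  set ηa := sSup (η '' B) with hηadef
  set m := sInf (Lfun '' K) with hmdef
  -- bounds involving sSup / sInf
  have hηaub : ∀ β ∈ B, η β ≤ ηa := by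
    intro β hβ
    refine le_csSup ⟨CH, ?_⟩ (Set.mem_image_of_mem _ hβ)
    rintro x ⟨γ, hγ, rfl⟩
    exact (abs_le.1 (hCH γ hγ).2).2
  have hSne : ∀ α, ((fun β => ⟪β, α⟫ - H β) '' B).Nonempty :=
    fun α => ⟨_, Set.mem_image_of_mem _ hβ₀B⟩
  have hSbdd : ∀ α, BddAbove ((fun β => ⟪β, α⟫ - H β) '' B) := by
    intro α
    refine ⟨(a + ‖β₀‖) * ‖α‖ + CH, ?_⟩
    rintro x ⟨β, hβ, rfl⟩
    have h1 : ⟪β, α⟫ ≤ ‖β‖ * ‖α‖ := real_inner_le_norm β α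
    have h2 : ‖β‖ * ‖α‖ ≤ (a + ‖β₀‖) * ‖α‖ :=
      mul_le_mul_of_nonneg_right (hβnormB β hβ) (norm_nonneg α)
    have h3 : -CH ≤ H β := (abs_le.1 (hCH β hβ).1).1
    simp only
    linarith
  obtain ⟨RK, hRK⟩ := hK.isBounded.subset_closedBall 0
  have hLlow : ∀ α ∈ K, -(‖β₀‖ * RK) - CH ≤ Lfun α := by
    intro α hα
    have h1 : ⟪-β₀, α⟫ - H (-β₀) ≤ Lfun α :=
      le_csSup (hSbdd α) (Set.mem_image_of_mem _ hβ₀B)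
    have h2 : ⟪β₀, α⟫ ≤ ‖β₀‖ * ‖α‖ := real_inner_le_norm β₀ α
    have h3 : ‖α‖ ≤ RK := by simpa using hRK hα
    have h4 : ‖β₀‖ * ‖α‖ ≤ ‖β₀‖ * RK :=
      mul_le_mul_of_nonneg_left h3 (norm_nonneg β₀)
    have h5 : H (-β₀) ≤ CH := (abs_le.1 (hCH _ hβ₀B).1).2
    have h6 : ⟪-β₀, α⟫ = -⟪β₀, α⟫ := by
      simpa using inner_neg_left (𝕜 := ℝ) β₀ α
    rw [h6] at h1
    linarith
  have hmle : ∀ α ∈ K, m ≤ Lfun α := by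
    intro α hα
    refine csInf_le ⟨-(‖β₀‖ * RK) - CH, ?_⟩ (Set.mem_image_of_mem _ hα)
    rintro x ⟨α', hα', rfl⟩
    exact hLlow α' hα'
  -- key single-ball estimate
  have key : ∀ α' ∈ K, (P {ω | Ξ τ ω ∈ Metric.ball α' δ}).toReal ≤
      Real.exp (-τ * (m - ηa - lam * ‖β₀‖ - lam / 2)) := by
    intro α' hα'
    have hlt : m - lam / 4 < Lfun α' := lt_of_lt_of_le (by linarith) (hmle α' hα')
    obtain ⟨x, ⟨β, hβB, rfl⟩, hx⟩ := exists_lt_of_lt_csSup (hSne α') hlt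
    have hβnorm : ‖β‖ ≤ a + ‖β₀‖ := hβnormB β hβB
    set f := fun ω => Real.exp (τ * ⟪β, Ξ τ ω⟫) with hfdef
    have hinner : Measurable fun ω => ⟪β, Ξ τ ω⟫ :=
      measurable_const.inner (hmeas τ hτ1)
    have hfm : Measurable f := (Real.measurable_exp.comp (hinner.const_mul τ))
    have hbound : ∀ᵐ ω ∂P, ‖f ω‖ ≤ Real.exp (τ * (‖β‖ * C)) := by
      filter_upwards [hbdd τ hτ1] with ω hω
      have h1 : ⟪β, Ξ τ ω⟫ ≤ ‖β‖ * ‖Ξ τ ω‖ := real_inner_le_norm _ _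
      have h2 : ‖β‖ * ‖Ξ τ ω‖ ≤ ‖β‖ * C :=
        mul_le_mul_of_nonneg_left hω (norm_nonneg β)
      rw [Real.norm_eq_abs, abs_of_pos (Real.exp_pos _)]
      exact Real.exp_le_exp.2 (mul_le_mul_of_nonneg_left (h1.trans h2) hτpos.le)
    have hfint : Integrable f P :=
      Integrable.mono' (integrable_const _) hfm.aestronglyMeasurable hbound
    have hflow : Real.exp (-(τ * (‖β‖ * C))) ≤ ∫ ω, f ω ∂P := by
      have hae : ∀ᵐ ω ∂P, Real.exp (-(τ * (‖β‖ * C))) ≤ f ω := by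
        filter_upwards [hbdd τ hτ1] with ω hω
        have h1 : -(‖β‖ * ‖Ξ τ ω‖) ≤ ⟪β, Ξ τ ω⟫ := by
          have h := real_inner_le_norm β (-(Ξ τ ω))
          simp only [inner_neg_right, norm_neg] at h
          linarith
        have h2 : ‖β‖ * ‖Ξ τ ω‖ ≤ ‖β‖ * C :=
          mul_le_mul_of_nonneg_left hω (norm_nonneg β)
        refine Real.exp_le_exp.2 ?_
        nlinarith [hτpos.le]
      calc Real.exp (-(τ * (‖β‖ * C)))
          = ∫ _, Real.exp (-(τ * (‖β‖ * C))) ∂P := by simp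
        _ ≤ ∫ ω, f ω ∂P := integral_mono_ae (integrable_const _) hfint hae
    have hfpos : 0 < ∫ ω, f ω ∂P := lt_of_lt_of_le (Real.exp_pos _) hflow
    have hfub : ∫ ω, f ω ∂P ≤ Real.exp (τ * (H β + η β)) := by
      have h1 := hmom β hβB
      have h2 : Real.log (∫ ω, f ω ∂P) ≤ τ * (H β + η β) := by
        rw [← hfdef] at h1
        calc Real.log (∫ ω, f ω ∂P)
            = τ * (τ⁻¹ * Real.log (∫ ω, f ω ∂P)) := by
              field_simp
          _ ≤ τ * (H β + η β) := mul_le_mul_of_nonneg_left h1 hτpos.le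
      exact (Real.log_le_iff_le_exp hfpos).1 h2
    -- Chebyshev
    set A := {ω | Ξ τ ω ∈ Metric.ball α' δ} with hAdef
    have hAmeas : MeasurableSet A := (hmeas τ hτ1) measurableSet_ball
    set c := Real.exp (τ * (⟪β, α'⟫ - ‖β‖ * δ)) with hcdef
    have hcb : c * (P A).toReal ≤ ∫ ω, f ω ∂P := by
      have h1 : ∀ ω ∈ A, c ≤ f ω := by
        intro ω hω
        have hd : dist (Ξ τ ω) α' < δ := hω
        have h2 : ⟪β, α' - Ξ τ ω⟫ ≤ ‖β‖ * ‖α' - Ξ τ ω‖ := real_inner_le_norm _ _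
        have h3 : ‖α' - Ξ τ ω‖ ≤ δ := by
          rw [← dist_eq_norm, dist_comm]; exact hd.le
        have h4 : ⟪β, α' - Ξ τ ω⟫ = ⟪β, α'⟫ - ⟪β, Ξ τ ω⟫ := inner_sub_right _ _ _
        have h5 : ‖β‖ * ‖α' - Ξ τ ω‖ ≤ ‖β‖ * δ :=
          mul_le_mul_of_nonneg_left h3 (norm_nonneg β)
        refine Real.exp_le_exp.2 (mul_le_mul_of_nonneg_left ?_ hτpos.le)
        linarith
      calc c * (P A).toReal = ∫ _ in A, c ∂P := by
            rw [setIntegral_const]; simp [mul_comm, Measure.restrict_apply_univ, Measure.real]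
        _ ≤ ∫ ω in A, f ω ∂P :=
            setIntegral_mono_on (integrable_const _).integrableOn
              hfint.integrableOn hAmeas h1
        _ ≤ ∫ ω, f ω ∂P :=
            setIntegral_le_integral hfint
              (Filter.Eventually.of_forall fun ω => (Real.exp_pos _).le)
    have hPA : (P A).toReal ≤ Real.exp (τ * (H β + η β)) / c := by
      rw [le_div_iff₀ (Real.exp_pos _)]
      calc (P A).toReal * c = c * (P A).toReal := mul_comm _ _
        _ ≤ ∫ ω, f ω ∂P := hcb
        _ ≤ Real.exp (τ * (H β + η β)) := hfub
    have hδ1 : δ ≤ lam := min_le_left _ _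
    have hδ2 : δ ≤ lam / (4 * (a + 1)) := min_le_right _ _
    have h3 : ‖β‖ * δ ≤ lam / 4 + lam * ‖β₀‖ := by
      have hb1 : ‖β‖ * δ ≤ (a + ‖β₀‖) * δ :=
        mul_le_mul_of_nonneg_right hβnorm hδpos.le
      have hb2 : a * δ ≤ a * (lam / (4 * (a + 1))) :=
        mul_le_mul_of_nonneg_left hδ2 ha.le
      have hb3 : a * (lam / (4 * (a + 1))) ≤ lam / 4 := by
        rw [mul_div_assoc', div_le_div_iff₀ (by positivity) (by norm_num)]
        nlinarith
      have hb4 : ‖β₀‖ * δ ≤ ‖β₀‖ * lam :=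
        mul_le_mul_of_nonneg_left hδ1 (norm_nonneg β₀)
      nlinarith
    have hexp : Real.exp (τ * (H β + η β)) / c ≤
        Real.exp (-τ * (m - ηa - lam * ‖β₀‖ - lam / 2)) := by
      rw [hcdef, ← Real.exp_sub]
      refine Real.exp_le_exp.2 ?_
      have hlin : H β + η β - (⟪β, α'⟫ - ‖β‖ * δ) ≤
          -(m - ηa - lam * ‖β₀‖ - lam / 2) := by
        have h2' : η β ≤ ηa := hηaub β hβB
        linarith
      calc τ * (H β + η β) - τ * (⟪β, α'⟫ - ‖β‖ * δ)
          = τ * (H β + η β - (⟪β, α'⟫ - ‖β‖ * δ)) := by ring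
        _ ≤ τ * -(m - ηa - lam * ‖β₀‖ - lam / 2) :=
            mul_le_mul_of_nonneg_left hlin hτpos.le
        _ = -τ * (m - ηa - lam * ‖β₀‖ - lam / 2) := by ring
    exact hPA.trans hexp
  -- covering argument
  set pick : EuclideanSpace ℝ (Fin d) → EuclideanSpace ℝ (Fin d) := fun v =>
    if h : (K ∩ Metric.ball v (δ / 2)).Nonempty then h.choose else v with hpickdef
  have hpick : ∀ v, (K ∩ Metric.ball v (δ / 2)).Nonempty →
      pick v ∈ K ∧ pick v ∈ Metric.ball v (δ / 2) := by
    intro v h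
    simp only [hpickdef, dif_pos h]
    exact h.choose_spec
  set s : Finset (EuclideanSpace ℝ (Fin d)) :=
    htfin.toFinset.filter (fun v => (K ∩ Metric.ball v (δ / 2)).Nonempty) with hsdef
  set F : EuclideanSpace ℝ (Fin d) → Set Ω :=
    fun v => {ω | Ξ τ ω ∈ Metric.ball (pick v) δ} with hFdef
  have hsub : {ω | Ξ τ ω ∈ K} ≤ᵐ[P] ⋃ v ∈ s, F v := by
    filter_upwards [hbdd τ hτ1] with ω hω hωK
    have hωC : Ξ τ ω ∈ Metric.closedBall (0 : EuclideanSpace ℝ (Fin d)) C := by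
      simpa [Metric.mem_closedBall, dist_eq_norm] using hω
    obtain ⟨v, hv⟩ := Set.mem_iUnion.1 (htcov hωC)
    obtain ⟨hvt, hvball⟩ := Set.mem_iUnion.1 hv
    have hne : (K ∩ Metric.ball v (δ / 2)).Nonempty := ⟨Ξ τ ω, hωK, hvball⟩
    have hvs : v ∈ s := by
      rw [hsdef, Finset.mem_filter]
      exact ⟨htfin.mem_toFinset.2 hvt, hne⟩
    refine Set.mem_biUnion hvs ?_
    have hp := (hpick v hne).2
    have : dist (Ξ τ ω) (pick v) < δ := by
      calc dist (Ξ τ ω) (pick v) ≤ dist (Ξ τ ω) v + dist v (pick v) := dist_triangle _ _ _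
        _ < δ / 2 + δ / 2 := by
            refine add_lt_add hvball ?_
            rw [dist_comm]; exact hp
        _ = δ := by ring
    exact this
  have hmono : P {ω | Ξ τ ω ∈ K} ≤ ∑ v ∈ s, P (F v) :=
    (measure_mono_ae hsub).trans (measure_biUnion_finset_le s F)
  have hsum_ne : (∑ v ∈ s, P (F v)) ≠ ⊤ :=
    ENNReal.sum_ne_top.2 fun v _ => measure_ne_top P _
  have htr : (P {ω | Ξ τ ω ∈ K}).toReal ≤ ∑ v ∈ s, (P (F v)).toReal := by
    have h1 := ENNReal.toReal_mono hsum_ne hmono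
    rwa [ENNReal.toReal_sum (fun v _ => measure_ne_top P _)] at h1
  have hcardb : (s.card : ℝ) ≤ Real.exp (τ * lam / 2) := by
    have h1 : (s.card : ℝ) ≤ (htfin.toFinset.card : ℝ) := by
      exact_mod_cast Finset.card_le_card (Finset.filter_subset _ _)
    have h2 : N ≤ Real.exp (τ * lam / 2) := by
      have h3 : Real.log N ≤ τ * lam / 2 := by
        have h4 : 2 / lam * Real.log N ≤ τ := hτ0
        have h5 : 0 ≤ Real.log N := Real.log_nonneg hN1
        rw [div_mul_eq_mul_div, div_le_iff₀ hlam] at h4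
        linarith
      calc N = Real.exp (Real.log N) := (Real.exp_log (by linarith)).symm
        _ ≤ Real.exp (τ * lam / 2) := Real.exp_le_exp.2 h3
    have h0 : (0:ℝ) ≤ (htfin.toFinset.card : ℝ) := Nat.cast_nonneg _
    linarith [h1, h2]
  have hbnd : ∀ v ∈ s, (P (F v)).toReal ≤
      Real.exp (-τ * (m - ηa - lam * ‖β₀‖ - lam / 2)) := by
    intro v hv
    have hne : (K ∩ Metric.ball v (δ / 2)).Nonempty :=
      (Finset.mem_filter.1 hv).2
    exact key (pick v) (hpick v hne).1
  calc (P {ω | Ξ τ ω ∈ K}).toReal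
      ≤ ∑ v ∈ s, (P (F v)).toReal := htr
    _ ≤ ∑ _v ∈ s, Real.exp (-τ * (m - ηa - lam * ‖β₀‖ - lam / 2)) :=
        Finset.sum_le_sum hbnd
    _ = (s.card : ℝ) * Real.exp (-τ * (m - ηa - lam * ‖β₀‖ - lam / 2)) := by
        rw [Finset.sum_const, nsmul_eq_mul]
    _ ≤ Real.exp (τ * lam / 2) * Real.exp (-τ * (m - ηa - lam * ‖β₀‖ - lam / 2)) :=
        mul_le_mul_of_nonneg_right hcardb (Real.exp_pos _).le
    _ = Real.exp (-τ * (m - ηa - lam * ‖β₀‖ - lam)) := by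
        rw [← Real.exp_add]; ring_nf
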